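/- Let R be a commutative ring such that the total quotient ring T(R) is Noetherian. Then for every prime ideal p of R that is not semiregular, the localization R_p is a Noetherian ring. -/

import Mathlib

/-- An ideal `I` is semiregular if it contains a finitely generated subideal `J`
with zero annihilator. -/
def IsSemiregular {R : Type*} [CommRing R] (I : Ideal R) : Prop :=
  ∃ J : Ideal R, J.FG ∧ J ≤ I ∧ ∀ r : R, (∀ a ∈ J, a * r = 0) → r = 0

/-- If the total quotient ring `T(R)` is Noetherian, then for every
non-semiregular prime `p` of `R` the localization `R_p` is Noetherian. -/
theorem stmt_11 {R : Type*} [CommRing R] (hT : IsNoetherianRing (FractionRing R))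
    (p : Ideal R) [hp : p.IsPrime] (hns : ¬ IsSemiregular p) :
    IsNoetherianRing (Localization.AtPrime p) := by
  have hle : nonZeroDivisors R ≤ p.primeCompl := by
    intro a ha
    intro hap
    apply hns
    refine ⟨Ideal.span {a}, Submodule.fg_span_singleton a, ?_, ?_⟩
    · rwa [Ideal.span_singleton_le_iff_mem]
    · intro r hr
      have := hr a (Ideal.subset_span rfl)
      exact ha.2 r (by rwa [mul_comm])
  letI : Algebra (FractionRing R) (Localization.AtPrime p) :=
    IsLocalization.localizationAlgebraOfSubmonoidLe _ _ (nonZeroDivisors R) p.primeCompl hle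
  haveI : IsScalarTower R (FractionRing R) (Localization.AtPrime p) :=
    IsLocalization.localization_isScalarTower_of_submonoid_le _ _ _ _ hle
  haveI := IsLocalization.isLocalization_of_submonoid_le (FractionRing R)
    (Localization.AtPrime p) (nonZeroDivisors R) p.primeCompl hle
  exact IsLocalization.isNoetherianRing
    (p.primeCompl.map (algebraMap R (FractionRing R))) (Localization.AtPrime p) hT
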